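/- arXiv:0811.0228 — 2 statements merged into one kernel-verified Lean document; each statement's English description precedes it below -/
import Mathlib

section
/- Existence and uniqueness of the downstream speed (Rankine–Hugoniot/Bernoulli system): Let γ > 1 and b₀ ∈ ℝ with 1 + (γ−1)b₀ > 0. For every u⁻ ∈ (c_*, u_max) there exists a unique u⁺ ∈ (0, c_*) such that ρ((u⁺)²)·u⁺ = ρ((u⁻)²)·u⁻ (conservation of mass across the shock; the Bernoulli law i(ρ⁺) + (u⁺)²/2 = i(ρ⁻) + (u⁻)²/2 = b₀ with ρ^± := ρ((u^±)²) holds automatically). Moreover u⁺ < c_* < u⁻ and the entropy condition ρ((u⁺)²) > ρ((u⁻)²) holds. -/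
noncomputable section

open Set

/-- Two-dimensional Euclidean space (cross-section plane). -/
abbrev E2 : Type := EuclideanSpace ℝ (Fin 2)
/-- Three-dimensional Euclidean space. -/
abbrev E3 : Type := EuclideanSpace ℝ (Fin 3)

/-- The last two coordinates of a point of `E3`. -/
def tl (x : E3) : E2 := WithLp.toLp 2 (fun i : Fin 2 => x i.succ)

/-- The point of `E3` with first coordinate `a` and remaining coordinates `y`. -/
def pt (a : ℝ) (y : E2) : E3 := WithLp.toLp 2 (Fin.cons a (fun j => y j) : Fin 3 → ℝ)

/-- The `i`-th standard basis vector of `E3`. -/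
def e3 (i : Fin 3) : E3 := EuclideanSpace.single i 1

/-- `s_max = 2(b₀ + 1/(γ-1))`, the supremum of admissible squared speeds. -/
def sMax (γ b₀ : ℝ) : ℝ := 2 * (b₀ + 1 / (γ - 1))

/-- `u_max = √s_max`, the maximal speed. -/
def uMax (γ b₀ : ℝ) : ℝ := Real.sqrt (sMax γ b₀)

/-- The density `ρ(s) = (1 + (γ-1)(b₀ - s/2))^{1/(γ-1)}` as a function of the squared speed. -/
def dens (γ b₀ s : ℝ) : ℝ := (1 + (γ - 1) * (b₀ - s / 2)) ^ ((1:ℝ) / (γ - 1))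

/-- The critical (sonic) speed `c_* = √(2(1+(γ-1)b₀)/(γ+1))`. -/
def cStar (γ b₀ : ℝ) : ℝ := Real.sqrt (2 * (1 + (γ - 1) * b₀) / (γ + 1))

/-- The squared sound speed `c(s)² = 1 + (γ-1)(b₀ - s/2)` as a function of squared speed. -/
def soundSq (γ b₀ s : ℝ) : ℝ := 1 + (γ - 1) * (b₀ - s / 2)

/-- The specific enthalpy `i(ρ) = (ρ^{γ-1} - 1)/(γ-1)`. -/
def enth (γ ρ : ℝ) : ℝ := (ρ ^ (γ - 1) - 1) / (γ - 1)

lemma dens_eq (γ b₀ s : ℝ) : dens γ b₀ s = soundSq γ b₀ s ^ ((1:ℝ)/(γ-1)) := rfl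

lemma soundSq_eq (γ b₀ s : ℝ) (hγ : 1 < γ) :
    soundSq γ b₀ s = (γ-1)/2 * (sMax γ b₀ - s) := by
  have hne : γ - 1 ≠ 0 := by linarith
  unfold soundSq sMax; field_simp; ring

lemma cStar_sq (γ b₀ : ℝ) (hγ : 1 < γ) (hb : 0 < 1 + (γ - 1) * b₀) :
    cStar γ b₀ ^ 2 = 2 * (1 + (γ - 1) * b₀) / (γ + 1) := by
  have h1 : (0:ℝ) < γ + 1 := by linarith
  rw [cStar, Real.sq_sqrt (by positivity)]

lemma soundSq_sub (γ b₀ u : ℝ) (hγ : 1 < γ) (hb : 0 < 1 + (γ - 1) * b₀) :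
    soundSq γ b₀ (u^2) - u^2 = (γ+1)/2 * (cStar γ b₀ ^ 2 - u^2) := by
  have h1 : γ + 1 ≠ 0 := by linarith
  rw [cStar_sq γ b₀ hγ hb]; unfold soundSq; field_simp; ring

lemma hasDerivAt_flux (γ b₀ u : ℝ) (hγ : 1 < γ) (hA : 0 < soundSq γ b₀ (u^2)) :
    HasDerivAt (fun v => dens γ b₀ (v^2) * v)
      (soundSq γ b₀ (u^2) ^ ((1:ℝ)/(γ-1) - 1) * (soundSq γ b₀ (u^2) - u^2)) u := by
  have hne : γ - 1 ≠ 0 := by linarith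
  set A := soundSq γ b₀ (u^2) with hAdef
  have h1 : HasDerivAt (fun v : ℝ => 1 + (γ-1)*(b₀ - v^2/2)) (-((γ-1)*u)) u := by
    have h := ((((hasDerivAt_pow 2 u).div_const 2).const_sub b₀).const_mul (γ-1)).const_add 1
    refine h.congr_deriv ?_
    norm_num
  have h2 : HasDerivAt (fun x : ℝ => x ^ ((1:ℝ)/(γ-1)))
      ((1/(γ-1)) * A ^ ((1:ℝ)/(γ-1) - 1)) A :=
    Real.hasDerivAt_rpow_const (Or.inl hA.ne')
  have h3 := (h2.comp u h1).mul (hasDerivAt_id u)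
  have heq : (1/(γ-1) * A ^ ((1:ℝ)/(γ-1)-1) * -((γ-1)*u)) * id u
      + (fun v : ℝ => 1 + (γ-1)*(b₀ - v^2/2)) u ^ ((1:ℝ)/(γ-1)) * 1
      = A ^ ((1:ℝ)/(γ-1)-1) * (A - u^2) := by
    have hA1 : A ^ ((1:ℝ)/(γ-1)) = A ^ ((1:ℝ)/(γ-1)-1) * A := by
      rw [← Real.rpow_add_one hA.ne']; ring_nf
    have : (fun v : ℝ => 1 + (γ-1)*(b₀ - v^2/2)) u = A := by simp [hAdef, soundSq]
    rw [this, hA1]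
    field_simp
    simp only [id]; ring
  rw [← heq]
  exact h3

lemma enth_dens (γ b₀ s : ℝ) (hγ : 1 < γ) (hA : 0 ≤ soundSq γ b₀ s) :
    enth γ (dens γ b₀ s) + s / 2 = b₀ := by
  have hne : γ - 1 ≠ 0 := by linarith
  simp only [enth, dens_eq]
  rw [← Real.rpow_mul hA, one_div_mul_cancel hne, Real.rpow_one]
  unfold soundSq
  field_simp
  ring

/-- **Existence and uniqueness of the downstream speed** (Rankine–Hugoniot/Bernoulli
system): for `γ > 1`, `1 + (γ-1)b₀ > 0` and `u⁻ ∈ (c_*, u_max)`, there exists a unique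
`u⁺ ∈ (0, c_*)` with `ρ((u⁺)²)u⁺ = ρ((u⁻)²)u⁻`; moreover the Bernoulli law
`i(ρ^±) + (u^±)²/2 = b₀` holds automatically, `u⁺ < c_* < u⁻`, and the entropy
condition `ρ((u⁺)²) > ρ((u⁻)²)` holds. -/
theorem downstream_speed_exists_unique
    (γ b₀ uminus : ℝ) (hγ : 1 < γ) (hb : 0 < 1 + (γ - 1) * b₀)
    (hu : uminus ∈ Ioo (cStar γ b₀) (uMax γ b₀)) :
    (∃! uplus : ℝ, uplus ∈ Ioo 0 (cStar γ b₀) ∧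
      dens γ b₀ (uplus ^ 2) * uplus = dens γ b₀ (uminus ^ 2) * uminus) ∧
    (∀ uplus : ℝ, uplus ∈ Ioo 0 (cStar γ b₀) →
      dens γ b₀ (uplus ^ 2) * uplus = dens γ b₀ (uminus ^ 2) * uminus →
      enth γ (dens γ b₀ (uplus ^ 2)) + uplus ^ 2 / 2 = b₀ ∧
      enth γ (dens γ b₀ (uminus ^ 2)) + uminus ^ 2 / 2 = b₀ ∧
      uplus < cStar γ b₀ ∧ cStar γ b₀ < uminus ∧
      dens γ b₀ (uminus ^ 2) < dens γ b₀ (uplus ^ 2)) := by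
  obtain ⟨hcu, huM⟩ := hu
  have hne : γ - 1 ≠ 0 := by linarith
  have hγ1 : (0:ℝ) < γ - 1 := by linarith
  have hγp : (0:ℝ) < γ + 1 := by linarith
  set c := cStar γ b₀ with hc
  have hc0 : 0 < c := Real.sqrt_pos.2 (by positivity)
  have hcsq : c ^ 2 = 2 * (1 + (γ-1)*b₀) / (γ+1) := cStar_sq γ b₀ hγ hb
  have hu0 : 0 < uminus := hc0.trans hcu
  have hsMeq : sMax γ b₀ = 2*(1+(γ-1)*b₀)/(γ-1) := by unfold sMax; field_simp; ring
  have hsM0 : 0 < sMax γ b₀ := by rw [hsMeq]; positivity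
  have husq : uminus ^ 2 < sMax γ b₀ := by
    have h1 : uminus ^ 2 < uMax γ b₀ ^ 2 := by
      apply pow_lt_pow_left₀ huM hu0.le two_ne_zero
    rwa [uMax, Real.sq_sqrt hsM0.le] at h1
  have hcsM : c ^ 2 < sMax γ b₀ := by
    rw [hcsq, hsMeq]
    exact div_lt_div_of_pos_left (by positivity) hγ1 (by linarith)
  have hposA : ∀ s, s < sMax γ b₀ → 0 < soundSq γ b₀ s := by
    intro s hs
    rw [soundSq_eq γ b₀ s hγ]
    have : 0 < sMax γ b₀ - s := by linarith
    positivity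
  set F : ℝ → ℝ := fun u => dens γ b₀ (u^2) * u with hF
  -- positivity of A on [0,c]
  have hAIcc : ∀ x ∈ Icc (0:ℝ) c, 0 < soundSq γ b₀ (x^2) := by
    intro x hx
    exact hposA _ (lt_of_le_of_lt (by nlinarith [hx.1, hx.2] : x^2 ≤ c^2) hcsM)
  have hAIcc2 : ∀ x ∈ Icc c uminus, 0 < soundSq γ b₀ (x^2) := by
    intro x hx
    refine hposA _ (lt_of_le_of_lt ?_ husq)
    nlinarith [hx.1, hx.2, hc0]
  have hcont : ContinuousOn F (Icc 0 c) := fun x hx =>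
    (hasDerivAt_flux γ b₀ x hγ (hAIcc x hx)).continuousAt.continuousWithinAt
  have hmono : StrictMonoOn F (Icc 0 c) := by
    apply strictMonoOn_of_deriv_pos (convex_Icc 0 c) hcont
    intro x hx
    rw [interior_Icc] at hx
    have hA := hAIcc x ⟨hx.1.le, hx.2.le⟩
    rw [(hasDerivAt_flux γ b₀ x hγ hA).deriv]
    apply mul_pos (Real.rpow_pos_of_pos hA _)
    rw [soundSq_sub γ b₀ x hγ hb]
    have : x^2 < c^2 := by nlinarith [hx.1, hx.2]
    have h2 : (0:ℝ) < c^2 - x^2 := by linarith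
    positivity
  have hanti : StrictAntiOn F (Icc c uminus) := by
    apply strictAntiOn_of_deriv_neg (convex_Icc c uminus)
    · exact fun x hx => (hasDerivAt_flux γ b₀ x hγ (hAIcc2 x hx)).continuousAt.continuousWithinAt
    · intro x hx
      rw [interior_Icc] at hx
      have hA := hAIcc2 x ⟨hx.1.le, hx.2.le⟩
      rw [(hasDerivAt_flux γ b₀ x hγ hA).deriv]
      apply mul_neg_of_pos_of_neg (Real.rpow_pos_of_pos hA _)
      rw [soundSq_sub γ b₀ x hγ hb]
      have : c^2 < x^2 := by nlinarith [hx.1, hx.2, hc0]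
      nlinarith
  have hF0 : F 0 = 0 := by simp [hF]
  have hFu_pos : 0 < F uminus := by
    apply mul_pos _ hu0
    rw [dens_eq]
    exact Real.rpow_pos_of_pos (hposA _ husq) _
  have hFuc : F uminus < F c :=
    hanti ⟨le_rfl, hcu.le⟩ ⟨hcu.le, le_rfl⟩ hcu
  obtain ⟨up, hupmem, hFup⟩ := intermediate_value_Ioo hc0.le hcont ⟨lt_of_le_of_lt hF0.le hFu_pos, hFuc⟩
  constructor
  · refine ⟨up, ⟨hupmem, hFup⟩, ?_⟩
    rintro y ⟨hy1, hy2⟩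
    exact hmono.injOn (Ioo_subset_Icc_self hy1) (Ioo_subset_Icc_self hupmem)
      (hy2.trans hFup.symm)
  · rintro uplus ⟨hp0, hpc⟩ _
    have hpsq : uplus ^ 2 < c ^ 2 := by nlinarith
    have hpu : uplus ^ 2 < uminus ^ 2 := by nlinarith
    refine ⟨enth_dens γ b₀ _ hγ (hposA _ (hpsq.trans hcsM)).le,
      enth_dens γ b₀ _ hγ (hposA _ husq).le, hpc, hcu, ?_⟩
    rw [dens_eq, dens_eq]
    apply Real.rpow_lt_rpow (hposA _ husq).le _ (by positivity)
    rw [soundSq_eq γ b₀ _ hγ, soundSq_eq γ b₀ _ hγ]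
    nlinarith
end
end

section
/- The isothermal case γ = 1: with ρ(s) := e^{b₀ − s/2} (so the critical speed is c_* = 1), the mass flux m(u) := u·e^{b₀ − u²/2} is strictly increasing on [0, 1] and strictly decreasing on [1, ∞); consequently, for every u⁻ > 1 there exists a unique u⁺ ∈ (0,1) such that u⁺·e^{−(u⁺)²/2} = u⁻·e^{−(u⁻)²/2}, and it satisfies ρ((u⁺)²) > ρ((u⁻)²). -/
noncomputable section

open Set

lemma flux_hasDerivAt (b₀ u : ℝ) :
    HasDerivAt (fun u => u * Real.exp (b₀ - u ^ 2 / 2))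
      ((1 - u ^ 2) * Real.exp (b₀ - u ^ 2 / 2)) u := by
  have h1 : HasDerivAt (fun u : ℝ => b₀ - u ^ 2 / 2) (-u) u := by
    have := ((hasDerivAt_pow 2 u).div_const 2).const_sub b₀
    refine this.congr_deriv ?_
    simp [pow_one]
  have h2 := h1.exp
  have h3 := (hasDerivAt_id u).mul h2
  refine h3.congr_deriv ?_
  simp [id]; ring

lemma flux_strictMonoOn (b₀ : ℝ) :
    StrictMonoOn (fun u => u * Real.exp (b₀ - u ^ 2 / 2)) (Icc (0:ℝ) 1) := by
  apply strictMonoOn_of_deriv_pos (convex_Icc 0 1)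
  · exact (continuous_id.mul (Real.continuous_exp.comp (by continuity))).continuousOn
  · intro x hx
    rw [interior_Icc] at hx
    rw [(flux_hasDerivAt b₀ x).deriv]
    have : (0:ℝ) < 1 - x ^ 2 := by nlinarith [hx.1, hx.2]
    positivity

lemma flux_strictAntiOn (b₀ : ℝ) :
    StrictAntiOn (fun u => u * Real.exp (b₀ - u ^ 2 / 2)) (Ici (1:ℝ)) := by
  apply strictAntiOn_of_deriv_neg (convex_Ici 1)
  · exact (continuous_id.mul (Real.continuous_exp.comp (by continuity))).continuousOn
  · intro x hx
    rw [interior_Ici] at hx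
    rw [(flux_hasDerivAt b₀ x).deriv]
    have h1 : 1 - x ^ 2 < 0 := by nlinarith [mem_Ioi.mp hx]
    have h2 : 0 < Real.exp (b₀ - x ^ 2 / 2) := Real.exp_pos _
    nlinarith

/-- **The isothermal case `γ = 1`**: with density `ρ(s) = e^{b₀ - s/2}` (so that the
critical speed is `c_* = 1`), the mass flux `m(u) = u·e^{b₀ - u²/2}` is strictly
increasing on `[0,1]` and strictly decreasing on `[1,∞)`; consequently, for every
`u⁻ > 1` there is a unique `u⁺ ∈ (0,1)` with `u⁺e^{-(u⁺)²/2} = u⁻e^{-(u⁻)²/2}`,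
and it satisfies the entropy condition `ρ((u⁺)²) > ρ((u⁻)²)`. -/
theorem isothermal_mass_flux_and_downstream_speed (b₀ : ℝ) :
    StrictMonoOn (fun u => u * Real.exp (b₀ - u ^ 2 / 2)) (Icc (0:ℝ) 1) ∧
    StrictAntiOn (fun u => u * Real.exp (b₀ - u ^ 2 / 2)) (Ici (1:ℝ)) ∧
    (∀ uminus : ℝ, 1 < uminus →
      (∃! uplus : ℝ, uplus ∈ Ioo (0:ℝ) 1 ∧
        uplus * Real.exp (-(uplus ^ 2) / 2) = uminus * Real.exp (-(uminus ^ 2) / 2)) ∧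
      (∀ uplus : ℝ, uplus ∈ Ioo (0:ℝ) 1 →
        uplus * Real.exp (-(uplus ^ 2) / 2) = uminus * Real.exp (-(uminus ^ 2) / 2) →
        Real.exp (b₀ - uminus ^ 2 / 2) < Real.exp (b₀ - uplus ^ 2 / 2))) := by
  refine ⟨flux_strictMonoOn b₀, flux_strictAntiOn b₀, ?_⟩
  intro uminus hu
  set g : ℝ → ℝ := fun u => u * Real.exp ((0:ℝ) - u ^ 2 / 2) with hg
  have hconv : ∀ u : ℝ, u * Real.exp (-(u ^ 2) / 2) = g u := by
    intro u; simp [hg, neg_div]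
  have hmono := flux_strictMonoOn 0
  have hanti := flux_strictAntiOn 0
  have hcont : ContinuousOn g (Icc (0:ℝ) 1) :=
    (continuous_id.mul (Real.continuous_exp.comp (by continuity))).continuousOn
  have hg0 : g 0 = 0 := by simp [hg]
  have ht1 : g uminus < g 1 :=
    hanti (mem_Ici.mpr le_rfl) (mem_Ici.mpr hu.le) hu
  have ht0 : 0 < g uminus := by
    have : (0:ℝ) < uminus := lt_trans one_pos hu
    have := Real.exp_pos ((0:ℝ) - uminus ^ 2 / 2)
    simp only [hg]; positivity
  have hIVT := intermediate_value_Ioo (zero_le_one) hcont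
    (show g uminus ∈ Ioo (g 0) (g 1) by rw [hg0]; exact ⟨ht0, ht1⟩)
  obtain ⟨uplus, hup, hval⟩ := hIVT
  constructor
  · refine ⟨uplus, ⟨hup, by rw [hconv, hconv]; exact hval⟩, ?_⟩
    rintro y ⟨hy, hyval⟩
    rw [hconv, hconv] at hyval
    have hsub : Ioo (0:ℝ) 1 ⊆ Icc (0:ℝ) 1 := Ioo_subset_Icc_self
    exact hmono.injOn (hsub hy) (hsub hup) (show g y = g uplus by rw [hyval, hval])
  · intro up hup2 hval2
    rw [Real.exp_lt_exp]
    have h1 : up < 1 := hup2.2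
    have h2 : 0 < up := hup2.1
    nlinarith
end
end
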